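/- arXiv:1607.06490 — 6 statements merged into one kernel-verified Lean document; each statement's English description precedes it below -/
import Mathlib

section
/- Let J be an infinite (p+2)-banded Hessenberg matrix (superdiagonal entries 1) and C ∈ ℂ such that det(J_n - C I_n) ≠ 0 for all n. Let J - CI = LU be the LU factorization with L unit lower triangular and U upper bidiagonal with diagonal entries γ_{np+n+1} and superdiagonal entries 1. Let {P_n} be the associated polynomial family of J. Then for all n ≥ 0: P_n(C) ≠ 0 and γ_{np+n+1} = - P_{n+1}(C) / P_n(C). -/
/-- Interval `[0, n-1]` in `ℤ` is the image of `range n`. -/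
lemma stmt3_icc_eq_image (n : ℕ) :
    Finset.Icc (0:ℤ) ((n:ℤ)-1) = (Finset.range n).image (fun k : ℕ => (k:ℤ)) := by
  ext i
  simp only [Finset.mem_Icc, Finset.mem_image, Finset.mem_range]
  constructor
  · rintro ⟨h0, h1⟩
    exact ⟨i.toNat, by omega, by omega⟩
  · rintro ⟨k, hk, rfl⟩
    omega

/-- For the LU factorization `J - CI = LU` of a `(p+2)`-banded
Hessenberg matrix with all leading minors of `J - CI` nonzero, the diagonal
entries of `U` are `γ_{np+n+1} = -P_{n+1}(C)/P_n(C)`. -/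
theorem stmt_3 (p : ℕ) (hp : 1 ≤ p)
    (J : ℤ → ℤ → ℂ)
    (hsup : ∀ i : ℤ, J i (i+1) = 1)
    (hband : ∀ i j : ℤ, (j < i - p ∨ i + 1 < j) → J i j = 0)
    (C : ℂ)
    (hdet : ∀ n : ℕ,
      (Matrix.of fun i j : Fin n => J i j - if i = j then C else 0).det ≠ 0)
    (L : ℕ → ℕ → ℂ) (γ : ℕ → ℂ)
    (hLdiag : ∀ i : ℕ, L i i = 1)
    (hLlow : ∀ i j : ℕ, i < j → L i j = 0)
    (hLband : ∀ i j : ℕ, j + p < i → L i j = 0)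
    (hLU : ∀ i j : ℕ,
      J i j - (if i = j then C else 0)
        = ∑ m ∈ Finset.range (i+1),
            L i m * (if j = m then γ (m*p+m+1) else if j = m+1 then 1 else 0))
    (P : ℤ → ℂ → ℂ)
    (hP0 : ∀ z, P 0 z = 1)
    (hPneg : ∀ n : ℤ, n < 0 → ∀ z, P n z = 0)
    (hrec : ∀ n : ℤ, 0 ≤ n → ∀ z,
      (∑ i ∈ Finset.Icc (n - p) (n - 1), J n i * P i z)
        + (J n n - z) * P n z + P (n+1) z = 0) :
    ∀ n : ℕ, P n C ≠ 0 ∧ γ (n*p+n+1) = -(P (n+1) C) / P n C := by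
  -- KEY recursion: γ (n*p+n+1) * P n C + P (n+1) C = 0 for all n.
  have key : ∀ n : ℕ, γ (n*p+n+1) * P (n:ℤ) C + P ((n:ℤ)+1) C = 0 := by
    intro n
    induction n using Nat.strong_induction_on with
    | _ n IH =>
      have hrecn := hrec (n:ℤ) (by positivity) C
      -- Step 1: the ℤ-sum equals a sum over `range n`.
      have hS : (∑ i ∈ Finset.Icc ((n:ℤ) - p) ((n:ℤ) - 1), J n i * P i C)
          = ∑ k ∈ Finset.range n, J (n:ℤ) (k:ℤ) * P (k:ℤ) C := by
        have hsubA : Finset.Icc ((n:ℤ) - p) ((n:ℤ) - 1)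
            ⊆ Finset.Icc (min ((n:ℤ) - p) 0) ((n:ℤ) - 1) :=
          Finset.Icc_subset_Icc (min_le_left _ _) le_rfl
        have hsubB : Finset.Icc (0:ℤ) ((n:ℤ) - 1)
            ⊆ Finset.Icc (min ((n:ℤ) - p) 0) ((n:ℤ) - 1) :=
          Finset.Icc_subset_Icc (min_le_right _ _) le_rfl
        have hA : (∑ i ∈ Finset.Icc ((n:ℤ) - p) ((n:ℤ) - 1), J n i * P i C)
            = ∑ i ∈ Finset.Icc (min ((n:ℤ) - p) 0) ((n:ℤ) - 1), J n i * P i C := by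
          apply Finset.sum_subset hsubA
          intro i hi hi'
          have hi1 : i < (n:ℤ) - p := by
            simp only [Finset.mem_Icc] at hi hi'
            omega
          rw [hband _ _ (Or.inl hi1), zero_mul]
        have hB : (∑ i ∈ Finset.Icc (0:ℤ) ((n:ℤ) - 1), J n i * P i C)
            = ∑ i ∈ Finset.Icc (min ((n:ℤ) - p) 0) ((n:ℤ) - 1), J n i * P i C := by
          apply Finset.sum_subset hsubB
          intro i hi hi'
          have hi1 : i < 0 := by
            simp only [Finset.mem_Icc] at hi hi'
            omega
          rw [hPneg _ hi1, mul_zero]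
        rw [hA, ← hB, stmt3_icc_eq_image,
          Finset.sum_image (by intro a _ b _ h; exact Nat.cast_injective h)]
      -- Step 2: rewrite entries of J using the LU factorization.
      have hT : (∑ k ∈ Finset.range n, J (n:ℤ) (k:ℤ) * P (k:ℤ) C)
          = ∑ m ∈ Finset.range (n+1), L n m *
              ∑ k ∈ Finset.range n,
                (if k = m then γ (m*p+m+1) else if k = m+1 then 1 else 0) * P (k:ℤ) C := by
        have h1 : ∀ k ∈ Finset.range n, J (n:ℤ) (k:ℤ) * P (k:ℤ) C
            = ∑ m ∈ Finset.range (n+1),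
                L n m * ((if k = m then γ (m*p+m+1) else if k = m+1 then 1 else 0)
                  * P (k:ℤ) C) := by
          intro k hk
          have hk' : k < n := Finset.mem_range.mp hk
          have hlu := hLU n k
          rw [if_neg (by omega), sub_zero] at hlu
          rw [hlu, Finset.sum_mul]
          apply Finset.sum_congr rfl
          intro m _
          ring
        rw [Finset.sum_congr rfl h1, Finset.sum_comm]
        apply Finset.sum_congr rfl
        intro m _
        rw [Finset.mul_sum]
      -- Step 3: evaluate the inner sums.
      have hinner : ∀ m : ℕ,
          (∑ k ∈ Finset.range n,
            (if k = m then γ (m*p+m+1) else if k = m+1 then 1 else 0) * P (k:ℤ) C)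
          = (if m ∈ Finset.range n then γ (m*p+m+1) * P (m:ℤ) C else 0)
            + (if m+1 ∈ Finset.range n then P ((m:ℤ)+1) C else 0) := by
        intro m
        have hsplit : ∀ k : ℕ,
            (if k = m then γ (m*p+m+1) else if k = m+1 then 1 else 0) * P (k:ℤ) C
            = (if k = m then γ (m*p+m+1) * P (k:ℤ) C else 0)
              + (if k = m+1 then P (k:ℤ) C else 0) := by
          intro k
          rcases eq_or_ne k m with rfl | h1
          · rw [if_pos rfl, if_pos rfl, if_neg (by omega)]
            ring
          · rw [if_neg h1, if_neg h1]
            rcases eq_or_ne k (m+1) with rfl | h2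
            · rw [if_pos rfl, if_pos rfl]
              ring
            · rw [if_neg h2, if_neg h2]
              ring
        rw [Finset.sum_congr rfl (fun k _ => hsplit k), Finset.sum_add_distrib,
          Finset.sum_ite_eq' (Finset.range n) m (fun k => γ (m*p+m+1) * P (k:ℤ) C),
          Finset.sum_ite_eq' (Finset.range n) (m+1) (fun k => P (k:ℤ) C)]
        rw [show ((m+1:ℕ):ℤ) = (m:ℤ)+1 from by push_cast; ring]
      rcases Nat.eq_zero_or_pos n with rfl | hn
      · -- n = 0 case
        have hsum0 : (∑ i ∈ Finset.Icc ((0:ℕ):ℤ) ((0:ℤ) - 1), J 0 i * P i C) = 0 := by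
          apply Finset.sum_eq_zero
          intro i hi
          have hi0 : i < 0 := by
            simp only [Finset.mem_Icc] at hi
            omega
          rw [hPneg _ hi0, mul_zero]
        have hd := hLU 0 0
        rw [if_pos rfl, Finset.range_one, Finset.sum_singleton, if_pos rfl, hLdiag,
          one_mul] at hd
        simp only [Nat.cast_zero] at hrecn ⊢
        have hsum0' : (∑ i ∈ Finset.Icc ((0:ℤ) - p) ((0:ℤ) - 1), J 0 i * P i C) = 0 := by
          apply Finset.sum_eq_zero
          intro i hi
          have hi0 : i < 0 := by
            simp only [Finset.mem_Icc] at hi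
            omega
          rw [hPneg _ hi0, mul_zero]
        rw [hsum0', zero_add] at hrecn
        simp only [Nat.cast_zero] at hd
        rw [← hd]
        linear_combination hrecn
      · -- n ≥ 1
        obtain ⟨N, rfl⟩ : ∃ N, n = N + 1 := ⟨n - 1, by omega⟩
        set n := N + 1 with hn'
        -- diagonal entry of J - CI
        have hdiag : J (n:ℤ) (n:ℤ) - C = γ (n*p+n+1) + L n N := by
          have hd := hLU n n
          rw [if_pos rfl] at hd
          rw [hd]
          have h2 : ∀ m ∈ Finset.range (n+1),
              L n m * (if n = m then γ (m*p+m+1) else if n = m+1 then 1 else 0)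
              = (if m = n then L n m * γ (m*p+m+1) else 0)
                + (if m = N then L n m else 0) := by
            intro m _
            rcases eq_or_ne m n with rfl | h1
            · rw [if_pos rfl, if_pos rfl, if_neg (by omega)]
              ring
            · rw [if_neg (fun h => h1 h.symm), if_neg h1]
              rcases eq_or_ne m N with rfl | h2
              · rw [if_pos (by omega), if_pos rfl]
                ring
              · rw [if_neg (by omega), if_neg h2]
                ring
          rw [Finset.sum_congr rfl h2, Finset.sum_add_distrib,
            Finset.sum_ite_eq' (Finset.range (n+1)) n (fun m => L n m * γ (m*p+m+1)),
            Finset.sum_ite_eq' (Finset.range (n+1)) N (fun m => L n m)]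
          rw [if_pos (Finset.mem_range.mpr (by omega)),
            if_pos (Finset.mem_range.mpr (by omega)), hLdiag]
          ring
        -- evaluate the double sum
        have hTval : (∑ m ∈ Finset.range (n+1), L n m *
              ∑ k ∈ Finset.range n,
                (if k = m then γ (m*p+m+1) else if k = m+1 then 1 else 0) * P (k:ℤ) C)
            = L n N * (γ (N*p+N+1) * P (N:ℤ) C) := by
          rw [Finset.sum_eq_single_of_mem N (Finset.mem_range.mpr (by omega))]
          · rw [hinner N, if_pos (Finset.mem_range.mpr (by omega)),
              if_neg (by simp [hn'])]
            ring
          · intro m hm hmN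
            rw [hinner m]
            rcases Nat.lt_or_ge m N with h | h
            · rw [if_pos (Finset.mem_range.mpr (by omega)),
                if_pos (Finset.mem_range.mpr (by omega)), IH m (by omega)]
              ring
            · have hmn : m = n := by
                simp only [Finset.mem_range] at hm
                omega
              subst hmn
              rw [if_neg (by simp), if_neg (by simp)]
              ring
        have hIHN : γ (N*p+N+1) * P (N:ℤ) C = - P ((N:ℤ)+1) C := by
          linear_combination IH N (by omega)
        have hNn : ((N:ℤ)+1) = ((n:ℕ):ℤ) := by rw [hn']; push_cast; ring
        rw [hS, hT, hTval, hIHN, hNn, hdiag] at hrecn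
        linear_combination hrecn
  -- P in terms of products of γ
  have hProd : ∀ n : ℕ, P (n:ℤ) C = (-1:ℂ)^n * ∏ m ∈ Finset.range n, γ (m*p+m+1) := by
    intro n
    induction n with
    | zero => simp [hP0]
    | succ k ih =>
      have hk : P ((k:ℤ)+1) C = - (γ (k*p+k+1) * P (k:ℤ) C) := by
        linear_combination key k
      have hcast : ((k+1 : ℕ) : ℤ) = (k:ℤ)+1 := by push_cast; ring
      rw [hcast, hk, ih, Finset.prod_range_succ]
      ring
  -- the product of γ equals the determinant, hence is nonzero
  have hprodne : ∀ n : ℕ, (∏ m ∈ Finset.range n, γ (m*p+m+1)) ≠ 0 := by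
    intro n
    have hfact : (Matrix.of fun i j : Fin n => J i j - if i = j then C else 0)
        = (Matrix.of fun i j : Fin n => L i j) *
          (Matrix.of fun i j : Fin n =>
            if (j:ℕ) = (i:ℕ) then γ ((i:ℕ)*p+(i:ℕ)+1)
            else if (j:ℕ) = (i:ℕ)+1 then 1 else 0) := by
      ext i j
      rw [Matrix.mul_apply]
      simp only [Matrix.of_apply]
      have hIJ : (if i = j then C else 0) = (if (i:ℕ) = (j:ℕ) then C else 0) := by
        simp [Fin.ext_iff]
      rw [hIJ, hLU (i:ℕ) (j:ℕ)]
      rw [Fin.sum_univ_eq_sum_range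
        (fun m => L (i:ℕ) m *
          (if (j:ℕ) = m then γ (m*p+m+1) else if (j:ℕ) = m+1 then 1 else 0)) n]
      apply Finset.sum_subset
      · intro m hm
        simp only [Finset.mem_range] at hm ⊢
        omega
      · intro m hm hm'
        simp only [Finset.mem_range] at hm hm'
        rw [hLlow i m (by omega), zero_mul]
    have hdL : (Matrix.of fun i j : Fin n => L i j).det = 1 := by
      rw [Matrix.det_of_lowerTriangular]
      · simp [hLdiag]
      · intro i j hij
        have hij' : i < j := by simpa using hij
        simp only [Matrix.of_apply]
        exact hLlow i j hij'
    have hdU : (Matrix.of fun i j : Fin n =>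
        if (j:ℕ) = (i:ℕ) then γ ((i:ℕ)*p+(i:ℕ)+1)
        else if (j:ℕ) = (i:ℕ)+1 then 1 else 0).det
        = ∏ m ∈ Finset.range n, γ (m*p+m+1) := by
      rw [Matrix.det_of_upperTriangular]
      · rw [← Fin.prod_univ_eq_prod_range (fun m => γ (m*p+m+1)) n]
        apply Finset.prod_congr rfl
        intro i _
        simp
      · intro i j hij
        have hij' : (j:ℕ) < (i:ℕ) := hij
        simp only [Matrix.of_apply]
        rw [if_neg (by omega), if_neg (by omega)]
    have hd := hdet n
    rw [hfact, Matrix.det_mul, hdL, hdU, one_mul] at hd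
    exact hd
  -- conclude
  intro n
  have hPn : P (n:ℤ) C ≠ 0 := by
    rw [hProd n]
    exact mul_ne_zero (pow_ne_zero _ (by norm_num)) (hprodne n)
  refine ⟨hPn, ?_⟩
  rw [eq_div_iff hPn]
  push_cast
  linear_combination key n
end

section
/- Let γ_n(t), n ∈ ℤ (with γ_n ≡ 0 for n ≤ 0), be differentiable functions satisfying the discrete KdV equation γ̇_n = γ_n(Σ_{i=1}^{p} γ_{n+i} - Σ_{i=1}^{p} γ_{n-i}). For fixed i ≥ 1 and k ≥ -1, define δ = γ_{(i-1)p+i} · γ_{ip+i} · ... · γ_{(k+i)p+i} (product of the γ's with indices (r+i)p+i for r = -1,...,k). Then δ̇ = δ · (Σ_{j=0}^{p} γ_{(k+i)p+i+j} - Σ_{j=0}^{p} γ_{(i-2)p+i+j}). -/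
lemma sum_reflect_icc (f : ℤ → ℂ) (p : ℤ) :
    ∑ j ∈ Finset.Icc (0:ℤ) p, f (p - j) = ∑ j ∈ Finset.Icc (0:ℤ) p, f j := by
  apply Finset.sum_nbij' (fun j => p - j) (fun j => p - j)
  · intro a ha; simp only [Finset.mem_Icc] at ha ⊢; omega
  · intro a ha; simp only [Finset.mem_Icc] at ha ⊢; omega
  · intro a _; ring
  · intro a _; ring
  · intro a _; ring_nf

lemma bracket_eq (γ : ℤ → ℝ → ℂ) (p : ℕ) (n : ℤ) (t : ℝ) :
    (∑ j ∈ Finset.Icc (1:ℤ) p, γ (n + j) t)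
      - ∑ j ∈ Finset.Icc (1:ℤ) p, γ (n - j) t
    = (∑ j ∈ Finset.Icc (0:ℤ) p, γ (n + j) t)
      - ∑ j ∈ Finset.Icc (0:ℤ) p, γ (n - p + j) t := by
  have h1 : ∑ j ∈ Finset.Icc (0:ℤ) p, γ (n - p + j) t
      = ∑ j ∈ Finset.Icc (0:ℤ) p, γ (n - j) t := by
    rw [← sum_reflect_icc (fun j => γ (n - p + j) t) p]
    apply Finset.sum_congr rfl
    intro j _; ring_nf
  rw [h1]
  have h2 : Finset.Icc (0:ℤ) p = insert 0 (Finset.Icc (1:ℤ) p) := by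
    ext x; simp only [Finset.mem_Icc, Finset.mem_insert]; omega
  have h0 : (0:ℤ) ∉ Finset.Icc (1:ℤ) p := by simp
  rw [h2, Finset.sum_insert h0, Finset.sum_insert h0]
  simp only [add_zero, sub_zero]
  ring

/-- Logarithmic-derivative (telescoping) identity for the product
`δ^{(i)}_k = γ_{(i-1)p+i} γ_{ip+i} ⋯ γ_{(k+i)p+i}` of solutions of the discrete
KdV equation. -/
theorem stmt_4 (p : ℕ) (hp : 1 ≤ p)
    (γ : ℤ → ℝ → ℂ)
    (hzero : ∀ n : ℤ, n ≤ 0 → ∀ t, γ n t = 0)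
    (hKdV : ∀ n : ℤ, ∀ t : ℝ,
      HasDerivAt (γ n)
        (γ n t * ((∑ i ∈ Finset.Icc (1:ℤ) p, γ (n + i) t)
          - ∑ i ∈ Finset.Icc (1:ℤ) p, γ (n - i) t)) t)
    (i k : ℤ) (hi : 1 ≤ i) (hk : -1 ≤ k) :
    ∀ t : ℝ,
      HasDerivAt (fun s => ∏ r ∈ Finset.Icc (-1 : ℤ) k, γ ((r + i) * p + i) s)
        ((∏ r ∈ Finset.Icc (-1 : ℤ) k, γ ((r + i) * p + i) t)
          * ((∑ j ∈ Finset.Icc (0:ℤ) p, γ ((k + i) * p + i + j) t)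
            - ∑ j ∈ Finset.Icc (0:ℤ) p, γ ((i - 2) * p + i + j) t)) t := by
  refine Int.le_induction
    (motive := fun k _ => ∀ t : ℝ,
      HasDerivAt (fun s => ∏ r ∈ Finset.Icc (-1 : ℤ) k, γ ((r + i) * p + i) s)
        ((∏ r ∈ Finset.Icc (-1 : ℤ) k, γ ((r + i) * p + i) t)
          * ((∑ j ∈ Finset.Icc (0:ℤ) p, γ ((k + i) * p + i + j) t)
            - ∑ j ∈ Finset.Icc (0:ℤ) p, γ ((i - 2) * p + i + j) t)) t)
    ?_ ?_ k hk
  ·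
    intro t
    simp only [Finset.Icc_self, Finset.prod_singleton]
    have h := hKdV ((-1 + i) * p + i) t
    rw [bracket_eq] at h
    have hsum : (∑ j ∈ Finset.Icc (0:ℤ) p, γ ((i - 2) * p + i + j) t)
        = ∑ j ∈ Finset.Icc (0:ℤ) p, γ ((-1 + i) * p + i - p + j) t :=
      Finset.sum_congr rfl fun j _ => by rw [show (i - 2) * p + i + j = (-1 + i) * p + i - p + j by ring]
    rw [hsum]
    exact h
  · intro k hk IH
    intro t
    have hnot : (k + 1) ∉ Finset.Icc (-1 : ℤ) k := by simp
    have hIcc : Finset.Icc (-1 : ℤ) (k + 1) = insert (k + 1) (Finset.Icc (-1 : ℤ) k) := by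
      ext x; simp only [Finset.mem_Icc, Finset.mem_insert]; omega
    simp only [hIcc, Finset.prod_insert hnot]
    have hd := (hKdV ((k + 1 + i) * p + i) t).mul (IH t)
    rw [bracket_eq] at hd
    convert hd using 1
    · rfl
    · rfl
    have hs1 : (∑ j ∈ Finset.Icc (0:ℤ) p, γ ((k + i) * p + i + j) t)
        = ∑ j ∈ Finset.Icc (0:ℤ) p, γ ((k + 1 + i) * p + i - p + j) t :=
      Finset.sum_congr rfl fun j _ => by rw [show (k + i) * p + i + j = (k + 1 + i) * p + i - p + j by ring]
    rw [hs1]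
    ring
end

section
/- Let γ_n(t), n ∈ ℤ (with γ_n ≡ 0 for n ≤ 0), be differentiable functions satisfying γ̇_n = γ_n(Σ_{i=1}^{p} γ_{n+i} - Σ_{i=1}^{p} γ_{n-i}). Fix integers i ≥ 1, k ≥ -1 and a tuple (i_1,...,i_{k+3}) with k+3 ≤ i_{k+3} ≤ ... ≤ i_1 ≤ p+1. Define Δ = γ_{(i-2)p+i+i_1-1} · γ_{(i-1)p+i+i_2-1} ⋯ γ_{(i+k)p+i+i_{k+3}-1}. Then Δ̇/Δ (when Δ ≠ 0) equals Σ_{j=1}^p γ_{(k+i)p+i+i_{k+3}+j-1} − Σ_{j=1}^p γ_{(i-3)p+i+i_1+j-2} + Σ_{r=1}^{k+2} ( Σ_{j=i+i_r}^{i+i_r+p-1} γ_{(r+i-3)p+j} − Σ_{j=i+i_{r+1}-1}^{i+i_{r+1}+p-2} γ_{(r+i-3)p+j} ). -/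
/-- Shift a sum over an integer interval. -/
lemma sum_Icc_shift (f : ℤ → ℂ) (a b c : ℤ) :
    ∑ j ∈ Finset.Icc a b, f (j + c) = ∑ j ∈ Finset.Icc (a + c) (b + c), f j := by
  rw [← Finset.map_add_right_Icc, Finset.sum_map]
  rfl

/-- Rewrite a "backward" sum as a sum over an interval. -/
lemma sum_Icc_sub (f : ℤ → ℂ) (n : ℤ) (q : ℤ) :
    ∑ j ∈ Finset.Icc (1:ℤ) q, f (n - j) = ∑ m ∈ Finset.Icc (n - q) (n - 1), f m := by
  refine Finset.sum_nbij' (fun j => n - j) (fun m => n - m) ?_ ?_ ?_ ?_ ?_ <;>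
    simp only [Finset.mem_Icc] <;> intros <;> first | omega | ring_nf | trivial

/-- The logarithmic derivative of the monomial
`Δ = γ_{(i-2)p+i+i_1-1} ⋯ γ_{(i+k)p+i+i_{k+3}-1}` of solutions of the discrete
KdV equation equals the regrouped sum of the KdV right-hand sides. -/
theorem stmt_5 (p : ℕ) (hp : 1 ≤ p)
    (γ : ℤ → ℝ → ℂ)
    (hzero : ∀ n : ℤ, n ≤ 0 → ∀ t, γ n t = 0)
    (hKdV : ∀ n : ℤ, ∀ t : ℝ,
      HasDerivAt (γ n)
        (γ n t * ((∑ j ∈ Finset.Icc (1:ℤ) p, γ (n + j) t)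
          - ∑ j ∈ Finset.Icc (1:ℤ) p, γ (n - j) t)) t)
    (i k : ℤ) (hi : 1 ≤ i) (hk : -1 ≤ k)
    (ι : ℤ → ℤ)
    (hmono : ∀ r s : ℤ, 1 ≤ r → r ≤ s → s ≤ k + 3 → ι s ≤ ι r)
    (hlo : k + 3 ≤ ι (k + 3)) (hhi : ι 1 ≤ p + 1) :
    ∀ t : ℝ,
      (∏ r ∈ Finset.Icc (1:ℤ) (k+3), γ ((i - 3 + r) * p + i + ι r - 1) t) ≠ 0 →
      deriv (fun s => ∏ r ∈ Finset.Icc (1:ℤ) (k+3), γ ((i - 3 + r) * p + i + ι r - 1) s) t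
          / (∏ r ∈ Finset.Icc (1:ℤ) (k+3), γ ((i - 3 + r) * p + i + ι r - 1) t)
        = (∑ j ∈ Finset.Icc (1:ℤ) p, γ ((k + i) * p + i + ι (k+3) + j - 1) t)
          - (∑ j ∈ Finset.Icc (1:ℤ) p, γ ((i - 3) * p + i + ι 1 + j - 2) t)
          + ∑ r ∈ Finset.Icc (1:ℤ) (k+2),
              ((∑ j ∈ Finset.Icc (i + ι r) (i + ι r + p - 1), γ ((r + i - 3) * p + j) t)
                - ∑ j ∈ Finset.Icc (i + ι (r+1) - 1) (i + ι (r+1) + p - 2),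
                    γ ((r + i - 3) * p + j) t) := by
  intro t hΔ
  set n : ℤ → ℤ := fun r => (i - 3 + r) * p + i + ι r - 1 with hn
  set g : ℤ → ℂ := fun m => γ m t with hg
  -- log-derivative of each factor
  set S : ℤ → ℂ := fun r =>
    (∑ j ∈ Finset.Icc (1:ℤ) p, g (n r + j)) - ∑ j ∈ Finset.Icc (1:ℤ) p, g (n r - j)
    with hS
  -- derivative of the product
  have hder : HasDerivAt (fun s => ∏ r ∈ Finset.Icc (1:ℤ) (k+3), γ (n r) s)
      (∑ r ∈ Finset.Icc (1:ℤ) (k+3),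
        (∏ j ∈ (Finset.Icc (1:ℤ) (k+3)).erase r, γ (n j) t) • (γ (n r) t * S r)) t := by
    have := HasDerivAt.finset_prod (u := Finset.Icc (1:ℤ) (k+3)) (fun r _ => hKdV (n r) t)
    rwa [Finset.prod_fn] at this
  have hderiv : deriv (fun s => ∏ r ∈ Finset.Icc (1:ℤ) (k+3), γ (n r) s) t
      = ∑ r ∈ Finset.Icc (1:ℤ) (k+3),
        (∏ j ∈ (Finset.Icc (1:ℤ) (k+3)).erase r, γ (n j) t) * (γ (n r) t * S r) := by
    simpa [smul_eq_mul] using hder.deriv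
  have hfact : ∀ r ∈ Finset.Icc (1:ℤ) (k+3),
      (∏ j ∈ (Finset.Icc (1:ℤ) (k+3)).erase r, γ (n j) t) * (γ (n r) t * S r)
        = (∏ j ∈ Finset.Icc (1:ℤ) (k+3), γ (n j) t) * S r := by
    intro r hr
    rw [← mul_assoc, Finset.prod_erase_mul _ _ hr]
  have hdiv : deriv (fun s => ∏ r ∈ Finset.Icc (1:ℤ) (k+3), γ (n r) s) t
      / (∏ r ∈ Finset.Icc (1:ℤ) (k+3), γ (n r) t)
      = ∑ r ∈ Finset.Icc (1:ℤ) (k+3), S r := by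
    rw [hderiv, Finset.sum_congr rfl hfact, ← Finset.mul_sum,
      mul_div_cancel_left₀ _ hΔ]
  rw [hdiv]
  clear hder hderiv hfact hdiv hΔ hKdV hzero
  -- interval forms
  have hA : ∀ r : ℤ, (∑ j ∈ Finset.Icc (1:ℤ) p, g (n r + j))
      = ∑ m ∈ Finset.Icc (n r + 1) (n r + p), g m := by
    intro r
    have := sum_Icc_shift g 1 p (n r)
    simpa [add_comm] using this
  have hB : ∀ r : ℤ, (∑ j ∈ Finset.Icc (1:ℤ) p, g (n r - j))
      = ∑ m ∈ Finset.Icc (n r - p) (n r - 1), g m := fun r => sum_Icc_sub g (n r) p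
  -- rewrite RHS pieces
  have hT1 : (∑ j ∈ Finset.Icc (1:ℤ) p, γ ((k + i) * p + i + ι (k+3) + j - 1) t)
      = ∑ m ∈ Finset.Icc (n (k+3) + 1) (n (k+3) + p), g m := by
    have h := sum_Icc_shift g 1 p ((k + i) * p + i + ι (k+3) - 1)
    have h2 : ∀ j : ℤ, γ ((k + i) * p + i + ι (k+3) + j - 1) t
        = g (j + ((k + i) * p + i + ι (k+3) - 1)) := by
      intro j; simp only [hg]; ring_nf
    calc (∑ j ∈ Finset.Icc (1:ℤ) p, γ ((k + i) * p + i + ι (k+3) + j - 1) t)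
        = ∑ j ∈ Finset.Icc (1:ℤ) p, g (j + ((k + i) * p + i + ι (k+3) - 1)) :=
          Finset.sum_congr rfl (fun j _ => h2 j)
      _ = ∑ m ∈ Finset.Icc (1 + ((k + i) * p + i + ι (k+3) - 1))
            ((p:ℤ) + ((k + i) * p + i + ι (k+3) - 1)), g m := h
      _ = ∑ m ∈ Finset.Icc (n (k+3) + 1) (n (k+3) + p), g m := by
          congr 1 <;> simp only [hn] <;> ring
  have hT2 : (∑ j ∈ Finset.Icc (1:ℤ) p, γ ((i - 3) * p + i + ι 1 + j - 2) t)
      = ∑ m ∈ Finset.Icc (n 1 - p) (n 1 - 1), g m := by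
    have h := sum_Icc_shift g 1 p ((i - 3) * p + i + ι 1 - 2)
    have h2 : ∀ j : ℤ, γ ((i - 3) * p + i + ι 1 + j - 2) t
        = g (j + ((i - 3) * p + i + ι 1 - 2)) := by
      intro j; simp only [hg]; ring_nf
    calc (∑ j ∈ Finset.Icc (1:ℤ) p, γ ((i - 3) * p + i + ι 1 + j - 2) t)
        = ∑ j ∈ Finset.Icc (1:ℤ) p, g (j + ((i - 3) * p + i + ι 1 - 2)) :=
          Finset.sum_congr rfl (fun j _ => h2 j)
      _ = ∑ m ∈ Finset.Icc (1 + ((i - 3) * p + i + ι 1 - 2))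
            ((p:ℤ) + ((i - 3) * p + i + ι 1 - 2)), g m := h
      _ = ∑ m ∈ Finset.Icc (n 1 - p) (n 1 - 1), g m := by
          congr 1 <;> simp only [hn] <;> ring
  have hT3 : ∀ r : ℤ,
      (∑ j ∈ Finset.Icc (i + ι r) (i + ι r + p - 1), γ ((r + i - 3) * p + j) t)
      = ∑ m ∈ Finset.Icc (n r + 1) (n r + p), g m := by
    intro r
    have h := sum_Icc_shift g (i + ι r) (i + ι r + p - 1) ((r + i - 3) * p)
    have h2 : ∀ j : ℤ, γ ((r + i - 3) * p + j) t = g (j + (r + i - 3) * p) := by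
      intro j; simp only [hg]; ring_nf
    calc (∑ j ∈ Finset.Icc (i + ι r) (i + ι r + p - 1), γ ((r + i - 3) * p + j) t)
        = ∑ j ∈ Finset.Icc (i + ι r) (i + ι r + p - 1), g (j + (r + i - 3) * p) :=
          Finset.sum_congr rfl (fun j _ => h2 j)
      _ = ∑ m ∈ Finset.Icc (i + ι r + (r + i - 3) * p)
            (i + ι r + p - 1 + (r + i - 3) * p), g m := h
      _ = ∑ m ∈ Finset.Icc (n r + 1) (n r + p), g m := by
          congr 1 <;> simp only [hn] <;> ring
  have hT4 : ∀ r : ℤ,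
      (∑ j ∈ Finset.Icc (i + ι (r+1) - 1) (i + ι (r+1) + p - 2), γ ((r + i - 3) * p + j) t)
      = ∑ m ∈ Finset.Icc (n (r+1) - p) (n (r+1) - 1), g m := by
    intro r
    have h := sum_Icc_shift g (i + ι (r+1) - 1) (i + ι (r+1) + p - 2) ((r + i - 3) * p)
    have h2 : ∀ j : ℤ, γ ((r + i - 3) * p + j) t = g (j + (r + i - 3) * p) := by
      intro j; simp only [hg]; ring_nf
    calc (∑ j ∈ Finset.Icc (i + ι (r+1) - 1) (i + ι (r+1) + p - 2),
            γ ((r + i - 3) * p + j) t)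
        = ∑ j ∈ Finset.Icc (i + ι (r+1) - 1) (i + ι (r+1) + p - 2),
            g (j + (r + i - 3) * p) := Finset.sum_congr rfl (fun j _ => h2 j)
      _ = ∑ m ∈ Finset.Icc (i + ι (r+1) - 1 + (r + i - 3) * p)
            (i + ι (r+1) + p - 2 + (r + i - 3) * p), g m := h
      _ = ∑ m ∈ Finset.Icc (n (r+1) - p) (n (r+1) - 1), g m := by
          congr 1 <;> simp only [hn] <;> ring
  -- abbreviations
  set A : ℤ → ℂ := fun r => ∑ m ∈ Finset.Icc (n r + 1) (n r + p), g m with hAdef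
  set B : ℤ → ℂ := fun r => ∑ m ∈ Finset.Icc (n r - p) (n r - 1), g m with hBdef
  have hSr : ∀ r : ℤ, S r = A r - B r := by
    intro r; simp only [hS, hA r, hB r, hAdef, hBdef]
  rw [hT1, hT2, Finset.sum_congr rfl (fun r _ => hSr r),
    Finset.sum_congr rfl (fun r _ => by rw [hT3 r, hT4 r] :
      ∀ r ∈ Finset.Icc (1:ℤ) (k+2), _ = A r - B (r+1))]
  -- pure algebra: ∑_{1..k+3} (A r - B r) = A (k+3) - B 1 + ∑_{1..k+2} (A r - B (r+1))
  have h1 : (1:ℤ) ≤ k + 3 := by omega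
  have hinsT : Finset.Icc (1:ℤ) (k+3) = insert (k+3) (Finset.Icc (1:ℤ) (k+2)) := by
    ext x; simp only [Finset.mem_Icc, Finset.mem_insert]; omega
  have hsplitA : ∑ r ∈ Finset.Icc (1:ℤ) (k+3), A r
      = (∑ r ∈ Finset.Icc (1:ℤ) (k+2), A r) + A (k+3) := by
    rw [hinsT, Finset.sum_insert (by simp), add_comm]
  have hshiftB : ∑ r ∈ Finset.Icc (1:ℤ) (k+3), B r
      = ∑ r ∈ Finset.Icc (0:ℤ) (k+2), B (r+1) := by
    have := sum_Icc_shift (fun m => B m) 0 (k+2) 1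
    rw [this]; congr 1 <;> ring
  have hins : Finset.Icc (0:ℤ) (k+2) = insert 0 (Finset.Icc (1:ℤ) (k+2)) := by
    ext x; simp only [Finset.mem_Icc, Finset.mem_insert]; omega
  have hsplitB : ∑ r ∈ Finset.Icc (1:ℤ) (k+3), B r
      = B 1 + ∑ r ∈ Finset.Icc (1:ℤ) (k+2), B (r+1) := by
    rw [hshiftB, hins, Finset.sum_insert (by simp)]
    norm_num
  rw [Finset.sum_sub_distrib, Finset.sum_sub_distrib, hsplitA, hsplitB]
  ring
end

section
/- Let p ≥ 1 and let γ_n, n ∈ ℤ (γ_n = 0 for n ≤ 0), be arbitrary complex numbers. For q ∈ {0,...,p}, k ≥ −1, i ≥ 1, let E^{(q)}_{k+2} be the set of tuples (i_1,...,i_{k+3}) with q+k+3 ≤ i_{k+3} ≤ ⋯ ≤ i_1 ≤ q+p+1, and for each such tuple let Δ^{(i)}_k = γ_{(i-2)p+i+i_1-1} γ_{(i-1)p+i+i_2-1} ⋯ γ_{(i+k)p+i+i_{k+3}-1}. Then Σ over E^{(q)}_{k+2} of Δ^{(i)}_k · ( Σ_{s=i_1}^{q+p+1} γ_{(i-2)p+i+s-1}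 − Σ_{s=i_2}^{i_1} γ_{(i-2)p+i+s-1} ) = 0. -/
lemma cancel_aux {m : ℕ} (A B : ℤ) (c : Fin m → ℤ → ℂ) (g : ℤ → ℂ)
    (z o : Fin m) (hoz : o ≠ z) (hz : ∀ b, z ≤ b) (ho : ∀ b, b ≠ z → o ≤ b)
    (hgz : ∀ t, c z t = g t) :
    ∑ f ∈ ((Fintype.piFinset fun _ : Fin m => Finset.Icc A B).filter
        (fun f => ∀ a b : Fin m, a ≤ b → f b ≤ f a)),
      (∏ r : Fin m, c r (f r)) *
        ((∑ s ∈ Finset.Icc (f z) B, g s)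
          - ∑ s ∈ Finset.Icc (f o) (f z), g s) = 0 := by
  classical
  set S := ((Fintype.piFinset fun _ : Fin m => Finset.Icc A B).filter
      (fun f => ∀ a b : Fin m, a ≤ b → f b ≤ f a)) with hSdef
  have hmem : ∀ f, f ∈ S ↔ ((∀ r, A ≤ f r ∧ f r ≤ B) ∧
      ∀ a b : Fin m, a ≤ b → f b ≤ f a) := by
    intro f
    simp [hSdef, Fintype.mem_piFinset, Finset.mem_Icc]
  have hprod : ∀ (f : Fin m → ℤ) (s : ℤ),
      (∏ r : Fin m, c r (Function.update f z s r)) * g (f z)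
        = (∏ r : Fin m, c r (f r)) * g s := by
    intro f s
    rw [← Finset.mul_prod_erase _ (fun r => c r (Function.update f z s r))
        (Finset.mem_univ z),
      ← Finset.mul_prod_erase _ (fun r => c r (f r)) (Finset.mem_univ z)]
    have e1 : ∏ r ∈ Finset.univ.erase z, c r (Function.update f z s r)
        = ∏ r ∈ Finset.univ.erase z, c r (f r) := by
      refine Finset.prod_congr rfl fun r hr => ?_
      rw [Function.update_of_ne (Finset.mem_erase.mp hr).1]
    rw [e1, Function.update_self, hgz, hgz]
    ring
  simp only [mul_sub]
  rw [Finset.sum_sub_distrib, sub_eq_zero]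
  simp only [Finset.mul_sum]
  rw [Finset.sum_sigma', Finset.sum_sigma']
  refine Finset.sum_nbij'
    (i := fun x : (_ : Fin m → ℤ) × ℤ => ⟨Function.update x.1 z x.2, x.1 z⟩)
    (j := fun x : (_ : Fin m → ℤ) × ℤ => ⟨Function.update x.1 z x.2, x.1 z⟩)
    ?_ ?_ ?_ ?_ ?_
  · rintro ⟨f, s⟩ hx
    simp only [Finset.mem_sigma, Finset.mem_Icc, hmem] at hx ⊢
    obtain ⟨⟨hbd, hmono⟩, hs1, hs2⟩ := hx
    refine ⟨⟨?_, ?_⟩, ?_, ?_⟩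
    · intro r
      by_cases hr : r = z
      · subst hr
        rw [Function.update_self]
        exact ⟨le_trans (hbd r).1 hs1, hs2⟩
      · rw [Function.update_of_ne hr]; exact hbd r
    · intro a b hab
      by_cases hazz : a = z
      · rw [hazz, Function.update_self]
        by_cases hbz : b = z
        · rw [hbz, Function.update_self]
        · rw [Function.update_of_ne hbz]
          exact le_trans (hmono z b (hz b)) hs1
      · have hbz : b ≠ z := fun h => hazz (le_antisymm (h ▸ hab) (hz a))
        rw [Function.update_of_ne hazz, Function.update_of_ne hbz]
        exact hmono a b hab
    · rw [Function.update_of_ne hoz]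
      exact hmono z o (hz o)
    · rw [Function.update_self]; exact hs1
  · rintro ⟨f, s⟩ hx
    simp only [Finset.mem_sigma, Finset.mem_Icc, hmem] at hx ⊢
    obtain ⟨⟨hbd, hmono⟩, hs1, hs2⟩ := hx
    refine ⟨⟨?_, ?_⟩, ?_, ?_⟩
    · intro r
      by_cases hr : r = z
      · subst hr
        rw [Function.update_self]
        exact ⟨le_trans (hbd o).1 hs1, le_trans hs2 (hbd r).2⟩
      · rw [Function.update_of_ne hr]; exact hbd r
    · intro a b hab
      by_cases hazz : a = z
      · rw [hazz, Function.update_self]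
        by_cases hbz : b = z
        · rw [hbz, Function.update_self]
        · rw [Function.update_of_ne hbz]
          exact le_trans (hmono o b (ho b hbz)) hs1
      · have hbz : b ≠ z := fun h => hazz (le_antisymm (h ▸ hab) (hz a))
        rw [Function.update_of_ne hazz, Function.update_of_ne hbz]
        exact hmono a b hab
    · rw [Function.update_self]; exact hs2
    · exact (hbd z).2
  · rintro ⟨f, s⟩ hx
    simp [Function.update_idem, Function.update_self, Function.update_eq_self]
  · rintro ⟨f, s⟩ hx
    simp [Function.update_idem, Function.update_self, Function.update_eq_self]
  · rintro ⟨f, s⟩ hx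
    exact (hprod f s).symm

/-- identity (r) of the paper: with `E^{(q)}_{k+2}` the set of
weakly decreasing tuples `(i_1,…,i_{k+3})` in `[q+k+3, q+p+1]` and
`Δ^{(i)}_k = γ_{(i-2)p+i+i_1-1} ⋯ γ_{(i+k)p+i+i_{k+3}-1}`,
`∑ Δ^{(i)}_k (∑_{s=i_1}^{q+p+1} γ_{(i-2)p+i+s-1} − ∑_{s=i_2}^{i_1} γ_{(i-2)p+i+s-1}) = 0`. -/
theorem stmt_15 (p : ℕ) (hp : 1 ≤ p) (q : ℕ) (hq : q ≤ p)
    (γ : ℤ → ℂ) (hzero : ∀ n : ℤ, n ≤ 0 → γ n = 0)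
    (k : ℤ) (hk : -1 ≤ k) (i : ℤ) (hi : 1 ≤ i)
    (m : ℕ) (hm : (m:ℤ) = k + 3) :
    ∑ f ∈ ((Fintype.piFinset fun _ : Fin m =>
          Finset.Icc ((q:ℤ) + k + 3) ((q:ℤ) + p + 1)).filter
        (fun f => ∀ a b : Fin m, a ≤ b → f b ≤ f a)),
      (∏ r : Fin m, γ ((i - 2 + (r:ℕ)) * p + i + f r - 1))
        * ((∑ s ∈ Finset.Icc (f ⟨0, by omega⟩) ((q:ℤ) + p + 1),
              γ ((i - 2) * p + i + s - 1))
          - ∑ s ∈ Finset.Icc (f ⟨1, by omega⟩) (f ⟨0, by omega⟩),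
              γ ((i - 2) * p + i + s - 1)) = 0 := by
  have hm2 : 2 ≤ m := by omega
  exact cancel_aux ((q:ℤ) + k + 3) ((q:ℤ) + p + 1)
    (fun r t => γ ((i - 2 + (r:ℕ)) * p + i + t - 1))
    (fun s => γ ((i - 2) * p + i + s - 1))
    ⟨0, by omega⟩ ⟨1, by omega⟩
    (by simp [Fin.ext_iff])
    (fun b => by simp [Fin.le_def])
    (fun b hb => by
      have : b.val ≠ 0 := by simpa [Fin.ext_iff] using hb
      simp only [Fin.le_def]; omega)
    (fun t => by norm_num)
end

section
/- Let γ_n, n ∈ ℤ (γ_n = 0 for n ≤ 0), be arbitrary complex numbers and fix p ≥ 1, q ∈ {0,...,p}, k ≥ −1, i ≥ 1. With E^{(q)}_{k+2} and Δ^{(i)}_k as above, for each r ∈ {2,...,k+2}: Σ over E^{(q)}_{k+2} of Δ^{(i)}_k · ( Σ_{s=i_r}^{i_{r-1}} γ_{(r+i-4)p+i+s+p-1} − Σ_{s=i_{r+1}}^{i_r} γ_{(r+i-4)p+i+s+p-1} ) = 0. -/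
/-- identity (lll) of the paper: for `2 ≤ r ≤ k+2`,
`∑_{E^{(q)}_{k+2}} Δ^{(i)}_k (∑_{s=i_r}^{i_{r-1}} γ_{(r+i-4)p+i+s+p-1}
  − ∑_{s=i_{r+1}}^{i_r} γ_{(r+i-4)p+i+s+p-1}) = 0`. -/
theorem stmt_16 (p : ℕ) (hp : 1 ≤ p) (q : ℕ) (hq : q ≤ p)
    (γ : ℤ → ℂ) (hzero : ∀ n : ℤ, n ≤ 0 → γ n = 0)
    (k : ℤ) (hk : -1 ≤ k) (i : ℤ) (hi : 1 ≤ i)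
    (m : ℕ) (hm : (m:ℤ) = k + 3)
    (r : ℕ) (hr1 : 2 ≤ r) (hr2 : (r:ℤ) ≤ k + 2) :
    ∑ f ∈ ((Fintype.piFinset fun _ : Fin m =>
          Finset.Icc ((q:ℤ) + k + 3) ((q:ℤ) + p + 1)).filter
        (fun f => ∀ a b : Fin m, a ≤ b → f b ≤ f a)),
      (∏ s : Fin m, γ ((i - 2 + (s:ℕ)) * p + i + f s - 1))
        * ((∑ s ∈ Finset.Icc (f ⟨r - 1, by omega⟩) (f ⟨r - 2, by omega⟩),
              γ (((r:ℤ) + i - 4) * p + i + s + p - 1))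
          - ∑ s ∈ Finset.Icc (f ⟨r, by omega⟩) (f ⟨r - 1, by omega⟩),
              γ (((r:ℤ) + i - 4) * p + i + s + p - 1)) = 0 := by
  have hmr : r < m := by omega
  have hmr1 : r - 1 < m := by omega
  have hmr2 : r - 2 < m := by omega
  set ir : Fin m := ⟨r, hmr⟩
  set ir1 : Fin m := ⟨r - 1, hmr1⟩
  set ir2 : Fin m := ⟨r - 2, hmr2⟩
  set S := ((Fintype.piFinset fun _ : Fin m =>
          Finset.Icc ((q:ℤ) + k + 3) ((q:ℤ) + p + 1)).filter
        (fun f => ∀ a b : Fin m, a ≤ b → f b ≤ f a)) with hS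
  simp only [mul_sub]
  rw [Finset.sum_sub_distrib, sub_eq_zero]
  simp only [Finset.mul_sum]
  rw [Finset.sum_sigma' S (fun f => Finset.Icc (f ir1) (f ir2)),
      Finset.sum_sigma' S (fun f => Finset.Icc (f ir) (f ir1))]
  -- key arithmetic : the gamma factor at index ir1
  have key : ∀ v : ℤ, (i - 2 + ((ir1 : ℕ) : ℤ)) * p + i + v - 1
      = ((r:ℤ) + i - 4) * p + i + v + p - 1 := by
    intro v
    have : ((ir1 : ℕ) : ℤ) = (r : ℤ) - 1 := by
      simp only [ir1]
      push_cast [Nat.cast_sub (by omega : 1 ≤ r)]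
      ring
    rw [this]; ring
  refine Finset.sum_nbij' (fun x => ⟨Function.update x.1 ir1 x.2, x.1 ir1⟩)
    (fun x => ⟨Function.update x.1 ir1 x.2, x.1 ir1⟩) ?_ ?_ ?_ ?_ ?_
  · rintro ⟨f, t⟩ hx
    simp only [Finset.mem_sigma, hS, Finset.mem_filter, Fintype.mem_piFinset,
      Finset.mem_Icc] at hx ⊢
    obtain ⟨⟨hrange, hmono⟩, ht1, ht2⟩ := hx
    have hle12 : f ir1 ≤ f ir2 := hmono ir2 ir1 (Fin.mk_le_mk.mpr (by omega))
    have hler1 : f ir ≤ f ir1 := hmono ir1 ir (Fin.mk_le_mk.mpr (by omega))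
    refine ⟨⟨fun a => ?_, fun a b hab => ?_⟩, ?_, ?_⟩
    · by_cases ha : a = ir1
      · subst ha; simp only [Function.update_self]
        exact ⟨le_trans (hrange ir1).1 ht1, le_trans ht2 (hrange ir2).2⟩
      · rw [Function.update_of_ne ha]; exact hrange a
    · by_cases ha : a = ir1 <;> by_cases hb : b = ir1
      · subst ha hb; exact le_rfl
      · subst ha; rw [Function.update_self, Function.update_of_ne hb]
        exact le_trans (hmono ir1 b (lt_of_le_of_ne hab (Ne.symm hb)).le) ht1
      · subst hb; rw [Function.update_self, Function.update_of_ne ha]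
        refine le_trans ht2 (hmono a ir2 ?_)
        have : (a : ℕ) < r - 1 := lt_of_le_of_ne (by exact_mod_cast hab) (by
          intro h; exact ha (Fin.ext h))
        simp [ir2, Fin.le_def]; omega
      · rw [Function.update_of_ne ha, Function.update_of_ne hb]
        exact hmono a b hab
    · have hne : ir ≠ ir1 := by simp [ir, ir1, Fin.ext_iff]; omega
      rw [Function.update_of_ne hne]
      exact hler1
    · rw [Function.update_self]
      exact ht1
  · rintro ⟨f, t⟩ hx
    simp only [Finset.mem_sigma, hS, Finset.mem_filter, Fintype.mem_piFinset,
      Finset.mem_Icc] at hx ⊢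
    obtain ⟨⟨hrange, hmono⟩, ht1, ht2⟩ := hx
    have hle12 : f ir1 ≤ f ir2 := hmono ir2 ir1 (Fin.mk_le_mk.mpr (by omega))
    have hler1 : f ir ≤ f ir1 := hmono ir1 ir (Fin.mk_le_mk.mpr (by omega))
    refine ⟨⟨fun a => ?_, fun a b hab => ?_⟩, ?_, ?_⟩
    · by_cases ha : a = ir1
      · subst ha; simp only [Function.update_self]
        exact ⟨le_trans (hrange ir).1 ht1, le_trans ht2 (hrange ir1).2⟩
      · rw [Function.update_of_ne ha]; exact hrange a
    · by_cases ha : a = ir1 <;> by_cases hb : b = ir1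
      · subst ha hb; exact le_rfl
      · subst ha; rw [Function.update_self, Function.update_of_ne hb]
        have hir : ir ≤ b := by
          have : (r:ℕ) - 1 < (b:ℕ) := lt_of_le_of_ne (by exact_mod_cast hab)
            (by intro h; exact hb (Fin.ext h.symm))
          simp [ir, Fin.le_def]; omega
        exact le_trans (hmono ir b hir) ht1
      · subst hb; rw [Function.update_self, Function.update_of_ne ha]
        exact le_trans ht2 (hmono a ir1 hab)
      · rw [Function.update_of_ne ha, Function.update_of_ne hb]
        exact hmono a b hab
    · rw [Function.update_self]; exact ht2
    · have hne : ir2 ≠ ir1 := by simp [ir2, ir1, Fin.ext_iff]; omega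
      rw [Function.update_of_ne hne]
      exact hle12
  · rintro ⟨f, t⟩ hx
    simp [Function.update_idem, Function.update_self, Function.update_eq_self]
  · rintro ⟨f, t⟩ hx
    simp [Function.update_idem, Function.update_self, Function.update_eq_self]
  · rintro ⟨f, t⟩ hx
    simp only
    -- value equality
    have hsplit : ∀ g : Fin m → ℤ,
        (∏ s : Fin m, γ ((i - 2 + (s:ℕ)) * p + i + g s - 1))
        = γ ((i - 2 + ((ir1:ℕ):ℤ)) * p + i + g ir1 - 1)
          * ∏ s ∈ Finset.univ.erase ir1, γ ((i - 2 + (s:ℕ)) * p + i + g s - 1) := by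
      intro g
      rw [← Finset.mul_prod_erase Finset.univ _ (Finset.mem_univ ir1)]
    rw [hsplit, hsplit]
    have hrest : ∏ s ∈ Finset.univ.erase ir1,
        γ ((i - 2 + (s:ℕ)) * p + i + (Function.update f ir1 t) s - 1)
        = ∏ s ∈ Finset.univ.erase ir1, γ ((i - 2 + (s:ℕ)) * p + i + f s - 1) := by
      refine Finset.prod_congr rfl fun s hs => ?_
      rw [Function.update_of_ne (Finset.ne_of_mem_erase hs)]
    rw [hrest, Function.update_self, key, key]
    ring
end

section
/- Let γ_n(t) satisfy the discrete KdV system γ̇_n = γ_n(Σ_{i=1}^p γ_{n+i} − Σ_{i=1}^p γ_{n-i}) (with γ_n ≡ 0 for n ≤ 0), and for j ∈ {0,...,p} define a^{(j)}_{i,i}(t) = C + Σ_{s=j+1}^{j+p+1} γ_{(i-1)p+i+s}(t). Then the diagonal entries satisfy the Toda equation for k = 0: d/dt a^{(j)}_{i,i} = a^{(j)}_{i+1,i} − a^{(j)}_{i,i-1}, where a^{(j)}_{i+1,i} = Σ_{j+2 ≤ i_2 ≤ i_1 ≤ j+p+1} γ_{(i-1)p+i+i_1} γ_{ip+i+i_2}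 and a^{(j)}_{i,i-1} = Σ_{j+2 ≤ i_2 ≤ i_1 ≤ j+p+1} γ_{(i-2)p+i+i_1-1} γ_{(i-1)p+i+i_2-1}. -/
open Finset

private lemma sum_Icc_extend {a b c d : ℤ} (h1 : c ≤ a) (h2 : b ≤ d) (f : ℤ → ℂ) :
    ∑ x ∈ Icc a b, f x = ∑ x ∈ Icc c d, if a ≤ x ∧ x ≤ b then f x else 0 := by
  rw [← Finset.sum_filter]
  refine Finset.sum_congr ?_ (fun _ _ => rfl)
  ext x
  simp only [mem_Icc, mem_filter]
  omega

private lemma ite_and_sum (c : Prop) [Decidable c] (s : Finset ℤ) (d : ℤ → Prop)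
    [DecidablePred d] (f : ℤ → ℂ) :
    (if c then ∑ y ∈ s, if d y then f y else 0 else 0)
      = ∑ y ∈ s, if c ∧ d y then f y else 0 := by
  split_ifs with h
  · exact Finset.sum_congr rfl fun y _ => by simp [h]
  · exact (Finset.sum_eq_zero fun y _ => by simp [h]).symm

private lemma keyclean (p : ℕ) (j : ℤ) (g : ℤ → ℂ) :
    ∑ m ∈ Icc (j+1) (j+(p:ℤ)+1),
        g m * ((∑ l ∈ Icc (1:ℤ) (p:ℤ), g (m+l)) - ∑ l ∈ Icc (1:ℤ) (p:ℤ), g (m-l))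
    = (∑ i₁ ∈ Icc (j+2) (j+(p:ℤ)+1), ∑ i₂ ∈ Icc (j+2) i₁, g i₁ * g ((p:ℤ)+i₂))
      - ∑ i₁ ∈ Icc (j+2) (j+(p:ℤ)+1), ∑ i₂ ∈ Icc (j+2) i₁, g (i₁-1-(p:ℤ)) * g (i₂-1) := by
  set P : ℤ := (p:ℤ) with hPdef
  have hP0 : 0 ≤ P := by omega
  set W : Finset ℤ := Icc (j+1-P) (j+2*P+1) with hW
  have h1 : ∑ m ∈ Icc (j+1) (j+P+1), g m * ∑ l ∈ Icc (1:ℤ) P, g (m+l)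
      = ∑ x ∈ W, ∑ y ∈ W,
          if ((j+1 ≤ x ∧ x ≤ j+P+1) ∧ (x+1 ≤ y ∧ y ≤ x+P)) then g x * g y else 0 := by
    rw [sum_Icc_extend (show j+1-P ≤ j+1 by omega) (show j+P+1 ≤ j+2*P+1 by omega)]
    refine Finset.sum_congr rfl fun x _ => ?_
    rw [← ite_and_sum]
    split_ifs with h
    · rw [Finset.mul_sum,
        show (∑ l ∈ Icc (1:ℤ) P, g x * g (x+l)) = ∑ y ∈ Icc (x+1) (x+P), g x * g y from
          (Finset.sum_nbij' (fun y => y - x) (fun l => x + l)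
            (by intro a ha; simp only [mem_Icc] at *; omega)
            (by intro a ha; simp only [mem_Icc] at *; omega)
            (by intro a _; ring) (by intro a _; ring)
            (by intro a _; rw [show x + (a - x) = a from by ring])).symm]
      exact sum_Icc_extend (by omega) (by omega) _
    · rfl
  have h2 : ∑ m ∈ Icc (j+1) (j+P+1), g m * ∑ l ∈ Icc (1:ℤ) P, g (m-l)
      = ∑ x ∈ W, ∑ y ∈ W,
          if ((j+1 ≤ y ∧ y ≤ j+P+1) ∧ (y-P ≤ x ∧ x ≤ y-1)) then g y * g x else 0 := by
    rw [sum_Icc_extend (show j+1-P ≤ j+1 by omega) (show j+P+1 ≤ j+2*P+1 by omega)]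
    rw [show (∑ x ∈ W, if j+1 ≤ x ∧ x ≤ j+P+1 then g x * ∑ l ∈ Icc (1:ℤ) P, g (x-l) else 0)
        = ∑ x ∈ W, ∑ y ∈ W,
            if ((j+1 ≤ x ∧ x ≤ j+P+1) ∧ (x-P ≤ y ∧ y ≤ x-1)) then g x * g y else 0 from
      Finset.sum_congr rfl fun x _ => by
        rw [← ite_and_sum]
        split_ifs with h
        · rw [Finset.mul_sum,
            show (∑ l ∈ Icc (1:ℤ) P, g x * g (x-l)) = ∑ y ∈ Icc (x-P) (x-1), g x * g y from
              (Finset.sum_nbij' (fun y => x - y) (fun l => x - l)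
                (by intro a ha; simp only [mem_Icc] at *; omega)
                (by intro a ha; simp only [mem_Icc] at *; omega)
                (by intro a _; ring) (by intro a _; ring)
                (by intro a _; rw [show x - (x - a) = a from by ring])).symm]
          exact sum_Icc_extend (by omega) (by omega) _
        · rfl]
    exact Finset.sum_comm
  have h3 : (∑ i₁ ∈ Icc (j+2) (j+P+1), ∑ i₂ ∈ Icc (j+2) i₁, g i₁ * g (P+i₂))
      = ∑ x ∈ W, ∑ y ∈ W,
          if ((j+2 ≤ x ∧ x ≤ j+P+1) ∧ (P+j+2 ≤ y ∧ y ≤ P+x)) then g x * g y else 0 := by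
    rw [sum_Icc_extend (show j+1-P ≤ j+2 by omega) (show j+P+1 ≤ j+2*P+1 by omega)]
    refine Finset.sum_congr rfl fun x _ => ?_
    rw [← ite_and_sum]
    split_ifs with h
    · rw [show (∑ i₂ ∈ Icc (j+2) x, g x * g (P+i₂)) = ∑ y ∈ Icc (P+(j+2)) (P+x), g x * g y from
        Finset.sum_nbij' (fun i₂ => P + i₂) (fun y => y - P)
          (by intro a ha; simp only [mem_Icc] at *; omega)
          (by intro a ha; simp only [mem_Icc] at *; omega)
          (by intro a _; ring) (by intro a _; ring)
          (fun a _ => rfl)]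
      rw [sum_Icc_extend (show j+1-P ≤ P+(j+2) by omega) (show P+x ≤ j+2*P+1 by omega)]
      exact Finset.sum_congr rfl fun y _ => by
        have : (P+(j+2) ≤ y ∧ y ≤ P+x) ↔ (P+j+2 ≤ y ∧ y ≤ P+x) := by omega
        simp only [this]
    · rfl
  have h4 : (∑ i₁ ∈ Icc (j+2) (j+P+1), ∑ i₂ ∈ Icc (j+2) i₁, g (i₁-1-P) * g (i₂-1))
      = ∑ x ∈ W, ∑ y ∈ W,
          if ((j+1-P ≤ x ∧ x ≤ j) ∧ (j+1 ≤ y ∧ y ≤ x+P)) then g x * g y else 0 := by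
    rw [show (∑ i₁ ∈ Icc (j+2) (j+P+1), ∑ i₂ ∈ Icc (j+2) i₁, g (i₁-1-P) * g (i₂-1))
        = ∑ x ∈ Icc (j+1-P) j, ∑ i₂ ∈ Icc (j+2) (x+P+1), g x * g (i₂-1) from
      Finset.sum_nbij' (fun i₁ => i₁ - P - 1) (fun x => x + P + 1)
        (by intro a ha; simp only [mem_Icc] at *; omega)
        (by intro a ha; simp only [mem_Icc] at *; omega)
        (by intro a _; ring) (by intro a _; ring)
        (fun a _ => by
          beta_reduce
          rw [show a - P - 1 + P + 1 = a from by ring]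
          exact Finset.sum_congr rfl fun i₂ _ => by
            rw [show a - P - 1 = a - 1 - P from by ring])]
    rw [sum_Icc_extend (show j+1-P ≤ j+1-P by omega) (show j ≤ j+2*P+1 by omega)]
    refine Finset.sum_congr rfl fun x _ => ?_
    rw [← ite_and_sum]
    split_ifs with h
    · rw [show (∑ i₂ ∈ Icc (j+2) (x+P+1), g x * g (i₂-1))
          = ∑ y ∈ Icc (j+1) (x+P), g x * g y from
        Finset.sum_nbij' (fun i₂ => i₂ - 1) (fun y => y + 1)
          (by intro a ha; simp only [mem_Icc] at *; omega)
          (by intro a ha; simp only [mem_Icc] at *; omega)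
          (by intro a _; ring) (by intro a _; ring)
          (fun a _ => rfl)]
      exact sum_Icc_extend (by omega) (by omega) _
    · rfl
  calc ∑ m ∈ Icc (j+1) (j+P+1),
          g m * ((∑ l ∈ Icc (1:ℤ) P, g (m+l)) - ∑ l ∈ Icc (1:ℤ) P, g (m-l))
      = (∑ m ∈ Icc (j+1) (j+P+1), g m * ∑ l ∈ Icc (1:ℤ) P, g (m+l))
          - ∑ m ∈ Icc (j+1) (j+P+1), g m * ∑ l ∈ Icc (1:ℤ) P, g (m-l) := by
        rw [← Finset.sum_sub_distrib]
        exact Finset.sum_congr rfl fun m _ => mul_sub _ _ _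
    _ = (∑ i₁ ∈ Icc (j+2) (j+P+1), ∑ i₂ ∈ Icc (j+2) i₁, g i₁ * g (P+i₂))
          - ∑ i₁ ∈ Icc (j+2) (j+P+1), ∑ i₂ ∈ Icc (j+2) i₁, g (i₁-1-P) * g (i₂-1) := by
        rw [h1, h2, h3, h4, ← Finset.sum_sub_distrib, ← Finset.sum_sub_distrib]
        refine Finset.sum_congr rfl fun x _ => ?_
        rw [← Finset.sum_sub_distrib, ← Finset.sum_sub_distrib]
        refine Finset.sum_congr rfl fun y _ => ?_
        split_ifs <;> first | (exfalso; omega) | ring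

/-- if the `γ`'s solve the discrete KdV system, then the diagonal
entries `a^{(j)}_{i,i} = C + ∑_{s=j+1}^{j+p+1} γ_{(i-1)p+i+s}` satisfy the Toda
equation `d/dt a^{(j)}_{i,i} = a^{(j)}_{i+1,i} − a^{(j)}_{i,i-1}` with the
`k = 1` Bäcklund entries. -/
theorem stmt_18 (p : ℕ) (hp : 1 ≤ p) (C : ℂ)
    (γ : ℤ → ℝ → ℂ)
    (hzero : ∀ n : ℤ, n ≤ 0 → ∀ t, γ n t = 0)
    (hKdV : ∀ n : ℤ, ∀ t : ℝ,
      HasDerivAt (γ n)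
        (γ n t * ((∑ m ∈ Finset.Icc (1:ℤ) p, γ (n + m) t)
          - ∑ m ∈ Finset.Icc (1:ℤ) p, γ (n - m) t)) t)
    (j : ℤ) (hj0 : 0 ≤ j) (hjp : j ≤ p) (i : ℤ) :
    ∀ t : ℝ,
      HasDerivAt
        (fun s => C + ∑ m ∈ Finset.Icc (j+1) (j+p+1), γ ((i-1) * p + i + m) s)
        ((∑ i₁ ∈ Finset.Icc (j+2) (j+p+1), ∑ i₂ ∈ Finset.Icc (j+2) i₁,
            γ ((i-1) * p + i + i₁) t * γ (i * p + i + i₂) t)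
          - ∑ i₁ ∈ Finset.Icc (j+2) (j+p+1), ∑ i₂ ∈ Finset.Icc (j+2) i₁,
              γ ((i-2) * p + i + i₁ - 1) t * γ ((i-1) * p + i + i₂ - 1) t) t := by
  intro t
  have hd : HasDerivAt
      (fun s => C + ∑ m ∈ Finset.Icc (j+1) (j+(p:ℤ)+1), γ ((i-1) * p + i + m) s)
      (∑ m ∈ Finset.Icc (j+1) (j+(p:ℤ)+1),
        γ ((i-1) * p + i + m) t *
          ((∑ l ∈ Finset.Icc (1:ℤ) (p:ℤ), γ ((i-1) * p + i + m + l) t)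
            - ∑ l ∈ Finset.Icc (1:ℤ) (p:ℤ), γ ((i-1) * p + i + m - l) t)) t :=
    (HasDerivAt.fun_sum fun m _ => hKdV ((i-1) * p + i + m) t).const_add C
  have K := keyclean p j (fun n => γ ((i-1) * p + i + n) t)
  have e1 : ∑ m ∈ Finset.Icc (j+1) (j+(p:ℤ)+1),
        γ ((i-1) * p + i + m) t *
          ((∑ l ∈ Finset.Icc (1:ℤ) (p:ℤ), γ ((i-1) * p + i + m + l) t)
            - ∑ l ∈ Finset.Icc (1:ℤ) (p:ℤ), γ ((i-1) * p + i + m - l) t)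
      = ∑ m ∈ Finset.Icc (j+1) (j+(p:ℤ)+1),
          (fun n => γ ((i-1) * p + i + n) t) m *
            ((∑ l ∈ Finset.Icc (1:ℤ) (p:ℤ), (fun n => γ ((i-1) * p + i + n) t) (m+l))
              - ∑ l ∈ Finset.Icc (1:ℤ) (p:ℤ), (fun n => γ ((i-1) * p + i + n) t) (m-l)) := by
    refine Finset.sum_congr rfl fun m _ => ?_
    beta_reduce
    congr 1
    congr 1
    · exact Finset.sum_congr rfl fun l _ => by
        rw [show (i-1) * p + i + m + l = (i-1) * p + i + (m + l) from by ring]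
    · exact Finset.sum_congr rfl fun l _ => by
        rw [show (i-1) * p + i + m - l = (i-1) * p + i + (m - l) from by ring]
  have e2 : ((∑ i₁ ∈ Finset.Icc (j+2) (j+(p:ℤ)+1), ∑ i₂ ∈ Finset.Icc (j+2) i₁,
        (fun n => γ ((i-1) * p + i + n) t) i₁ * (fun n => γ ((i-1) * p + i + n) t) ((p:ℤ)+i₂))
      - ∑ i₁ ∈ Finset.Icc (j+2) (j+(p:ℤ)+1), ∑ i₂ ∈ Finset.Icc (j+2) i₁,
          (fun n => γ ((i-1) * p + i + n) t) (i₁-1-(p:ℤ)) *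
            (fun n => γ ((i-1) * p + i + n) t) (i₂-1))
      = (∑ i₁ ∈ Finset.Icc (j+2) (j+(p:ℤ)+1), ∑ i₂ ∈ Finset.Icc (j+2) i₁,
            γ ((i-1) * p + i + i₁) t * γ (i * p + i + i₂) t)
          - ∑ i₁ ∈ Finset.Icc (j+2) (j+(p:ℤ)+1), ∑ i₂ ∈ Finset.Icc (j+2) i₁,
              γ ((i-2) * p + i + i₁ - 1) t * γ ((i-1) * p + i + i₂ - 1) t := by
    congr 1
    · refine Finset.sum_congr rfl fun i₁ _ => Finset.sum_congr rfl fun i₂ _ => ?_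
      beta_reduce
      rw [show (i-1) * p + i + ((p:ℤ) + i₂) = i * p + i + i₂ from by ring]
    · refine Finset.sum_congr rfl fun i₁ _ => Finset.sum_congr rfl fun i₂ _ => ?_
      beta_reduce
      rw [show (i-1) * p + i + (i₁ - 1 - (p:ℤ)) = (i-2) * p + i + i₁ - 1 from by ring,
        show (i-1) * p + i + (i₂ - 1) = (i-1) * p + i + i₂ - 1 from by ring]
  rw [show ((∑ i₁ ∈ Finset.Icc (j+2) (j+(p:ℤ)+1), ∑ i₂ ∈ Finset.Icc (j+2) i₁,
        γ ((i-1) * p + i + i₁) t * γ (i * p + i + i₂) t)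
      - ∑ i₁ ∈ Finset.Icc (j+2) (j+(p:ℤ)+1), ∑ i₂ ∈ Finset.Icc (j+2) i₁,
          γ ((i-2) * p + i + i₁ - 1) t * γ ((i-1) * p + i + i₂ - 1) t)
      = ∑ m ∈ Finset.Icc (j+1) (j+(p:ℤ)+1),
          γ ((i-1) * p + i + m) t *
            ((∑ l ∈ Finset.Icc (1:ℤ) (p:ℤ), γ ((i-1) * p + i + m + l) t)
              - ∑ l ∈ Finset.Icc (1:ℤ) (p:ℤ), γ ((i-1) * p + i + m - l) t) from by
    rw [e1, ← e2, ← K]]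
  exact hd
end
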